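/- If Eve has a strategy σ in a parity game G from position v such that every play agreeing with σ sees only finitely many odd priorities, then Eve wins the 0-register game on G from v; hence such games have register-index 0. -/
import Mathlib


/-- A parity game arena with priorities on edges. `owner v = true` means the
position belongs to Eve; `edge v p w` means there is an edge from `v` to `w`
carrying priority `p`. -/
structure PGame (V : Type) where
  owner : V → Bool
  edge : V → ℕ → V → Prop

/-- The priority `p` occurs infinitely often in the priority sequence `c`. -/
def InfOcc (c : ℕ → ℕ) (p : ℕ) : Prop := ∀ n, ∃ i, n ≤ i ∧ c i = p

/-- Eve wins a play whose sequence of traversed priorities is `c` iff the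
largest priority occurring infinitely often is even. -/
def EveWinsPlay (c : ℕ → ℕ) : Prop :=
  ∃ p, InfOcc c p ∧ Even p ∧ ∀ q, InfOcc c q → q ≤ p

/-- `π` (positions) together with `c` (priorities) forms a play of `G`. -/
def IsPlay {V : Type} (G : PGame V) (π : ℕ → V) (c : ℕ → ℕ) : Prop :=
  ∀ i, G.edge (π i) (c i) (π (i + 1))

/-- A (history-dependent) strategy: given the history of previously visited
positions and the current position, it picks an outgoing edge (priority and
successor). -/
structure Strategy {V : Type} (G : PGame V) where
  next : List V → V → ℕ × V
  valid : ∀ l v, G.edge v (next l v).1 (next l v).2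

def histUpTo {V : Type} (π : ℕ → V) (i : ℕ) : List V := List.ofFn (fun j : Fin i => π j)

/-- The play `(π, c)` agrees with the strategy `σ` of player `b`. -/
def Agrees {V : Type} (G : PGame V) (b : Bool) (σ : Strategy G) (π : ℕ → V) (c : ℕ → ℕ) : Prop :=
  ∀ i, G.owner (π i) = b → (c i, π (i + 1)) = σ.next (histUpTo π i) (π i)

/-- Player `b` (`true` = Eve, `false` = Adam) has a winning strategy from `v`. -/
def WinsFrom {V : Type} (G : PGame V) (b : Bool) (v : V) : Prop :=
  ∃ σ : Strategy G, ∀ π c, IsPlay G π c → π 0 = v → Agrees G b σ π c →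
    (if b = true then EveWinsPlay c else ¬ EveWinsPlay c)

/-- Register update: registers below `i` are reset to `0`, register `i` is set
to `p`, registers above `i` become `max (r j) p`. -/
def newReg {k : ℕ} (r : Fin (k + 1) → ℕ) (i : Fin (k + 1)) (p : ℕ) : Fin (k + 1) → ℕ :=
  fun j => if j < i then 0 else if j = i then p else max (r j) p

/-- Output produced when Eve chooses register `i` upon seeing priority `p`. -/
def outE {k : ℕ} (r : Fin (k + 1) → ℕ) (i : Fin (k + 1)) (p : ℕ) : ℕ :=
  if Even (max (r i) p) then 2 * i.1 else 2 * i.1 + 1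

/-- Output produced when Adam chooses register `i` (Adam-controlled variant). -/
def outA {k : ℕ} (r : Fin (k + 1) → ℕ) (i : Fin (k + 1)) (p : ℕ) : ℕ :=
  if Even (r i) then 2 * i.1 + 2 else 2 * i.1 + 1

/-- Positions of the `k`-register game: a position of `G`, the register
contents, and `none` (a move of `G` is next) or `some p` (the register
controller must choose a register, `p` being the priority just seen). -/
abbrev RegPos (V : Type) (k : ℕ) : Type := V × (Fin (k + 1) → ℕ) × Option ℕ

/-- The `k`-register game on `G` in which Eve controls the registers. -/
def regGameE {V : Type} (G : PGame V) (k : ℕ) : PGame (RegPos V k) where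
  owner := fun s => match s.2.2 with
    | none => G.owner s.1
    | some _ => true
  edge := fun s o s' => match s, s' with
    | (v, r, none), (w, r', some p) => G.edge v p w ∧ r' = r ∧ o = 0
    | (v, r, some p), (w, r', none) => w = v ∧ ∃ i, r' = newReg r i p ∧ o = outE r i p
    | _, _ => False

/-- The `k`-register game on `G` in which Adam controls the registers. -/
def regGameA {V : Type} (G : PGame V) (k : ℕ) : PGame (RegPos V k) where
  owner := fun s => match s.2.2 with
    | none => G.owner s.1
    | some _ => false
  edge := fun s o s' => match s, s' with
    | (v, r, none), (w, r', some p) => G.edge v p w ∧ r' = r ∧ o = 0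
    | (v, r, some p), (w, r', none) => w = v ∧ ∃ i, r' = newReg r i p ∧ o = outA r i p
    | _, _ => False


namespace Stmt4Aux

variable {V : Type}

def projE (l : List (RegPos V 0)) : List V :=
  (l.filter (fun s => s.2.2.isNone)).map Prod.fst

lemma edge_from_none (G : PGame V) {v : V} {r : Fin 1 → ℕ} {o : ℕ} {s' : RegPos V 0}
    (h : (regGameE G 0).edge (v, r, none) o s') :
    ∃ p, s' = (s'.1, r, some p) ∧ G.edge v p s'.1 ∧ o = 0 := by
  rcases s' with ⟨w, r', _ | p⟩
  · exact h.elim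
  · obtain ⟨hE, hr, ho⟩ := h
    exact ⟨p, by simp [hr], hE, ho⟩

lemma edge_from_some (G : PGame V) {v : V} {r : Fin 1 → ℕ} {p o : ℕ} {s' : RegPos V 0}
    (h : (regGameE G 0).edge (v, r, some p) o s') :
    s' = (v, newReg r 0 p, none) ∧ o = outE r 0 p := by
  rcases s' with ⟨w, r', _ | q⟩
  · obtain ⟨hw, i, hr, ho⟩ := h
    have hi : i = 0 := Fin.eq_zero i
    subst hi; subst hw; subst hr; subst ho; exact ⟨rfl, rfl⟩
  · exact h.elim

def liftStrat (G : PGame V) (σ : Strategy G) : Strategy (regGameE G 0) where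
  next l s := match s with
    | (v, r, none) => (0, ((σ.next (projE l) v).2, r, some (σ.next (projE l) v).1))
    | (v, r, some p) => (outE r 0 p, (v, newReg r 0 p, none))
  valid l s := by
    rcases s with ⟨v, r, _ | p⟩
    · exact ⟨σ.valid (projE l) v, rfl, rfl⟩
    · exact ⟨rfl, 0, rfl, rfl⟩

lemma histUpTo_succ {α : Type} (π : ℕ → α) (i : ℕ) :
    histUpTo π (i + 1) = histUpTo π i ++ [π i] := by
  rw [histUpTo, List.ofFn_succ']
  simp [histUpTo, List.concat_eq_append, Fin.last]

end Stmt4Aux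

namespace Stmt4Aux

def projPlay (π : ℕ → RegPos V 0) (e : ℕ) : ℕ → V := fun j => (π (2*j+e)).1
def projPrio (π : ℕ → RegPos V 0) (e : ℕ) : ℕ → ℕ := fun j => (π (2*j+e+1)).2.2.getD 0

lemma main (G : PGame V) (σ : Strategy G) (v : V)
    (hσ : ∀ π c, IsPlay G π c → π 0 = v → Agrees G true σ π c →
      ∃ N, ∀ i, N ≤ i → ¬ Odd (c i))
    (π : ℕ → RegPos V 0) (c : ℕ → ℕ) (e : ℕ)
    (hplay : IsPlay (regGameE G 0) π c)
    (hag : Agrees (regGameE G 0) true (liftStrat G σ) π c)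
    (he : (π e).2.2 = none) (hv : (π e).1 = v)
    (hbase : projE (histUpTo π e) = []) :
    EveWinsPlay c := by
  set π' : ℕ → V := projPlay π e with hπ'
  set c' : ℕ → ℕ := projPrio π e with hc'
  have key : ∀ j, (π (2*j+e)).2.2 = none →
      π (2*j+e) = (π' j, (π (2*j+e)).2.1, none) ∧
      π (2*j+e+1) = (π' (j+1), (π (2*j+e)).2.1, some (c' j)) ∧
      G.edge (π' j) (c' j) (π' (j+1)) ∧
      c (2*j+e) = 0 ∧
      π (2*j+e+2) = (π' (j+1), newReg (π (2*j+e)).2.1 0 (c' j), none) ∧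
      c (2*j+e+1) = outE (π (2*j+e)).2.1 0 (c' j) := by
    intro j htag
    rcases h1 : π (2*j+e) with ⟨a, s, tg⟩
    have htg : tg = none := by rw [h1] at htag; exact htag
    subst htg
    have h2 := hplay (2*j+e)
    rw [h1] at h2
    obtain ⟨p, hs', hE, ho⟩ := edge_from_none G h2
    have h3 := hplay (2*j+e+1)
    rw [hs'] at h3
    obtain ⟨h4, h5⟩ := edge_from_some G h3
    rw [show 2*j+e+1+1 = 2*j+e+2 by omega] at h4
    have hidx : 2*(j+1)+e = 2*j+e+2 := by ring
    have hcj : c' j = p := by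
      rw [hc']; show (π (2*j+e+1)).2.2.getD 0 = p
      rw [hs']; rfl
    have hpj : π' j = a := by rw [hπ']; show (π (2*j+e)).1 = a; rw [h1]
    have hpj1 : π' (j+1) = (π (2*j+e+1)).1 := by
      rw [hπ']; show (π (2*(j+1)+e)).1 = (π (2*j+e+1)).1
      rw [hidx, h4]
    refine ⟨?_, ?_, ?_, ho, ?_, ?_⟩
    · rw [hpj]
    · rw [hs', hpj1, hcj]
    · rw [hpj, hcj, hpj1]; exact hE
    · rw [h4, hpj1, hcj]
    · rw [h5, hcj]
  have tag : ∀ j, (π (2*j+e)).2.2 = none := by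
    intro j
    induction j with
    | zero => simpa using he
    | succ n ih =>
      have k := (key n ih).2.2.2.2.1
      have hidx : 2*(n+1)+e = 2*n+e+2 := by ring
      rw [hidx, k]
  have K := fun j => key j (tag j)
  have hplay' : IsPlay G π' c' := fun j => (K j).2.2.1
  have h0' : π' 0 = v := by rw [hπ']; show (π (2*0+e)).1 = v; simpa using hv
  have proj : ∀ j, projE (histUpTo π (2*j+e)) = histUpTo π' j := by
    intro j
    induction j with
    | zero => simpa [histUpTo] using hbase
    | succ n ih =>
      have hidx : 2*(n+1)+e = (2*n+e+1)+1 := by ring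
      have t1 : (π (2*n+e)).2.2 = none := tag n
      have t2 : (π (2*n+e+1)).2.2 = some (c' n) := by rw [(K n).2.1]
      have f1 : (π (2*n+e)).1 = π' n := by rw [hπ']; rfl
      rw [hidx, histUpTo_succ, histUpTo_succ, histUpTo_succ]
      simp [projE, List.filter_append, t1, t2, f1] at ih ⊢
      exact ih
  have hag' : Agrees G true σ π' c' := by
    intro j hown
    have howner : (regGameE G 0).owner (π (2*j+e)) = true := by
      rw [(K j).1]; simpa [regGameE] using hown
    have hthis := hag (2*j+e) howner
    rw [(K j).1] at hthis
    simp only [liftStrat] at hthis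
    rw [(K j).2.1, proj j] at hthis
    have h2 := congrArg Prod.snd hthis
    have hfst : π' (j+1) = (σ.next (histUpTo π' j) (π' j)).2 := congrArg Prod.fst h2
    have htg := congrArg (fun x => x.2.2) h2
    simp only at htg
    have hc : c' j = (σ.next (histUpTo π' j) (π' j)).1 := Option.some.inj htg
    rw [hc, hfst]
  obtain ⟨N, hN⟩ := hσ π' c' hplay' h0' hag'
  have hzero : ∀ m, 2*N+e+4 ≤ m → c m = 0 := by
    intro m hm
    obtain ⟨j, hj⟩ : ∃ j, m = 2*j+e ∨ m = 2*j+e+1 := ⟨(m-e)/2, by omega⟩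
    rcases hj with hj | hj
    · rw [hj]; exact (K j).2.2.2.1
    · have hjN : N + 1 ≤ j := by omega
      have hprev : (π (2*j+e)).2.1 0 = c' (j-1) := by
        have k := (K (j-1)).2.2.2.2.1
        have hidx : 2*(j-1)+e+2 = 2*j+e := by omega
        rw [hidx] at k
        rw [k]
        simp [newReg]
      have hev1 : Even (c' (j-1)) := Nat.not_odd_iff_even.mp (hN (j-1) (by omega))
      have hev2 : Even (c' j) := Nat.not_odd_iff_even.mp (hN j (by omega))
      have hevm : Even (max ((π (2*j+e)).2.1 0) (c' j)) := by
        rw [hprev]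
        rcases max_choice (c' (j-1)) (c' j) with h | h <;> rw [h] <;> assumption
      rw [hj, (K j).2.2.2.2.2]
      simp [outE, hevm]
  refine ⟨0, ?_, Even.zero, ?_⟩
  · intro n
    exact ⟨n + (2*N+e+4), by omega, hzero _ (by omega)⟩
  · intro q hq
    obtain ⟨i, hi, hci⟩ := hq (2*N+e+4)
    rw [← hci, hzero i hi]

end Stmt4Aux

/-- If Eve has a strategy `σ` in `G` from `v` such that every play
agreeing with `σ` sees only finitely many odd priorities, then Eve wins the
`0`-register game on `G` from `v` (from every register configuration); hence
such games have register-index `0`. -/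
theorem stmt4 {V : Type} (G : PGame V) (v : V)
    (h : ∃ σ : Strategy G, ∀ π c, IsPlay G π c → π 0 = v → Agrees G true σ π c →
        ∃ N, ∀ i, N ≤ i → ¬ Odd (c i)) :
    ∀ (r : Fin 1 → ℕ) (t : Option ℕ), WinsFrom (regGameE G 0) true (v, r, t) := by
  obtain ⟨σ, hσ⟩ := h
  intro r t
  refine ⟨Stmt4Aux.liftStrat G σ, ?_⟩
  intro π c hplay h0 hag
  rw [if_pos rfl]
  cases t with
  | none =>
    refine Stmt4Aux.main G σ v hσ π c 0 hplay hag ?_ ?_ ?_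
    · rw [h0]
    · rw [h0]
    · simp [Stmt4Aux.projE, histUpTo]
  | some p₀ =>
    have h2 := hplay 0
    rw [h0] at h2
    obtain ⟨h4, h5⟩ := Stmt4Aux.edge_from_some G h2
    have h4' : π 1 = (v, newReg r 0 p₀, none) := h4
    refine Stmt4Aux.main G σ v hσ π c 1 hplay hag ?_ ?_ ?_
    · rw [h4']
    · rw [h4']
    · simp [Stmt4Aux.projE, histUpTo, h0]
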